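/- arXiv:0810.1028 — 3 statements merged into one kernel-verified Lean document; each statement's English description precedes it below -/
import Mathlib

section
/- Let R be the valuation ring of a rank-1 valued field (K, w), with maximal ideal 𝔪. If c ∈ 𝔪 and f(X) ∈ R[[X]] satisfies f(c) = 0 (the series converges to 0 at c), then f(X) is divisible by (X − c) in R[[X]]. -/
open PowerSeries Filter Set

/-- An additive rank-1 (real-valued) non-archimedean valuation on a field `K`,
with values in `EReal` (real numbers on nonzero elements, `⊤` at `0`). -/
structure AddRealValuation (K : Type*) [Field K] where
  w : K → EReal
  map_zero' : w 0 = ⊤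
  finite' : ∀ x : K, x ≠ 0 → ∃ r : ℝ, w x = (r : EReal)
  map_one' : w 1 = 0
  map_mul' : ∀ x y : K, w (x * y) = w x + w y
  map_neg' : ∀ x : K, w (-x) = w x
  add_le' : ∀ x y : K, min (w x) (w y) ≤ w (x + y)

namespace AddRealValuation

variable {K : Type*} [Field K] (v : AddRealValuation K)

/-- The valuation is non-discrete: there exist elements of arbitrarily
small positive valuation. -/
def Nondiscrete : Prop := ∀ ε : ℝ, 0 < ε → ∃ x : K, 0 < v.w x ∧ v.w x < (ε : EReal)

/-- `K` is complete with respect to `v`: every Cauchy sequence converges. -/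
def IsComplete : Prop :=
  ∀ u : ℕ → K, (∀ M : ℝ, ∃ N : ℕ, ∀ m ≥ N, ∀ n ≥ N, (M : EReal) ≤ v.w (u m - u n)) →
    ∃ L : K, ∀ M : ℝ, ∃ N : ℕ, ∀ n ≥ N, (M : EReal) ≤ v.w (u n - L)

/-- The valuation ring `R = {x : K | w x ≥ 0}` of `v`. -/
def subring : Subring K where
  carrier := {x | 0 ≤ v.w x}
  zero_mem' := by show (0:EReal) ≤ v.w 0; rw [v.map_zero']; exact le_top
  one_mem' := by show (0:EReal) ≤ v.w 1; rw [v.map_one']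
  add_mem' := fun hx hy => le_trans (le_min hx hy) (v.add_le' _ _)
  mul_mem' := fun hx hy => by
    show (0:EReal) ≤ v.w _; rw [v.map_mul']; exact add_nonneg hx hy
  neg_mem' := fun {x} hx => by show (0:EReal) ≤ v.w (-x); rw [v.map_neg']; exact hx

/-- The extension of `v` to power series over `K`: the infimum of the
valuations of the coefficients. -/
noncomputable def wS (f : PowerSeries K) : EReal := ⨅ i : ℕ, v.w (PowerSeries.coeff (R := K) i f)

/-- The extension of `v` to power series over the valuation ring `R` of `v`. -/
noncomputable def wR (f : PowerSeries v.subring) : EReal :=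
  ⨅ i : ℕ, v.w ((PowerSeries.coeff (R := v.subring) i f : v.subring) : K)

/-- `f` is a convergent power series (lies in the Tate algebra `K{X}`):
the valuations of the coefficients tend to `∞`. -/
def Conv (f : PowerSeries K) : Prop :=
  ∀ M : ℝ, ∃ N : ℕ, ∀ i ≥ N, (M : EReal) ≤ v.w (PowerSeries.coeff (R := K) i f)

/-- The series `f(c) = Σ fᵢ cⁱ` (with `f` over the valuation ring `R`) converges to `0`:
the valuations of the partial sums tend to `∞`. -/
def EvalZeroR (f : PowerSeries v.subring) (c : v.subring) : Prop :=
  ∀ M : ℝ, ∃ N : ℕ, ∀ n ≥ N,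
    (M : EReal) ≤ v.w ((∑ i ∈ Finset.range n, PowerSeries.coeff (R := v.subring) i f * c ^ i : v.subring) : K)

end AddRealValuation

/-- `𝓕` is a defining family of rank-1 valuations exhibiting the domain `D`
(with fraction field `F`) as a generalized Krull domain:
(a) for each `v ∈ 𝓕` the valuation ring of `v` is the localization of `D`
at the prime `{a : v a > 0}`; (b) `⋂ D_v = D`; (c) each nonzero `a ∈ D`
satisfies `v a = 0` for all but finitely many `v ∈ 𝓕`. -/
def IsGKFamily (D : Type*) [CommRing D] [IsDomain D] (F : Type*) [Field F]
    [Algebra D F] [IsFractionRing D F] (𝓕 : Set (AddRealValuation F)) : Prop :=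
  (∀ u ∈ 𝓕, ∀ x : F, 0 ≤ u.w x ↔
    ∃ a b : D, b ≠ 0 ∧ ¬ 0 < u.w (algebraMap D F b) ∧ x * algebraMap D F b = algebraMap D F a) ∧
  (∀ x : F, (∀ u ∈ 𝓕, 0 ≤ u.w x) → ∃ a : D, x = algebraMap D F a) ∧
  (∀ a : D, a ≠ 0 → {u ∈ 𝓕 | u.w (algebraMap D F a) ≠ 0}.Finite)

section Aux

variable {K : Type*} [Field K] (v : AddRealValuation K)

lemma AddRealValuation.eq_zero_of_forall_le (x : K)
    (h : ∀ M : ℝ, (M : EReal) ≤ v.w x) : x = 0 := by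
  by_contra hx
  obtain ⟨r, hr⟩ := v.finite' x hx
  have := h (r + 1)
  rw [hr, EReal.coe_le_coe_iff] at this
  linarith

lemma AddRealValuation.w_sub_ge (x y : K) : min (v.w x) (v.w y) ≤ v.w (x - y) := by
  rw [sub_eq_add_neg, ← v.map_neg' y]
  exact v.add_le' _ _

lemma AddRealValuation.w_sum_ge (s : Finset ℕ) (a : ℕ → K) (M : EReal)
    (h : ∀ i ∈ s, M ≤ v.w (a i)) : M ≤ v.w (∑ i ∈ s, a i) := by
  classical
  induction s using Finset.cons_induction with
  | empty => rw [Finset.sum_empty, v.map_zero']; exact le_top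
  | cons j s hj ih =>
      rw [Finset.sum_cons]
      refine le_trans (le_min (h j (Finset.mem_cons_self _ _)) ?_) (v.add_le' _ _)
      exact ih fun i hi => h i (Finset.mem_cons_of_mem hi)

lemma AddRealValuation.w_pow (x : K) (r : ℝ) (hx : v.w x = (r : EReal)) (n : ℕ) :
    v.w (x ^ n) = ((n : ℝ) * r : ℝ) := by
  induction n with
  | zero => simp [v.map_one']
  | succ n ih =>
      rw [pow_succ, v.map_mul', ih, hx, ← EReal.coe_add]
      norm_cast
      push_cast
      ring

lemma AddRealValuation.w_inv (x : K) (r : ℝ) (hx0 : x ≠ 0) (hx : v.w x = (r : EReal)) :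
    v.w x⁻¹ = ((-r : ℝ) : EReal) := by
  have h1 : v.w (x * x⁻¹) = 0 := by rw [mul_inv_cancel₀ hx0, v.map_one']
  rw [v.map_mul', hx] at h1
  obtain ⟨s, hs⟩ := v.finite' x⁻¹ (inv_ne_zero hx0)
  rw [hs] at h1 ⊢
  rw [← EReal.coe_add] at h1
  norm_cast at h1 ⊢
  linarith

end Aux

/-- If `c` lies in the maximal ideal `𝔪` of the valuation ring `R`
and `f ∈ R[[X]]` satisfies `f(c) = 0` (the series converges to `0` at `c`),
then `(X - c)` divides `f` in `R[[X]]`. -/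
theorem statement2 {K : Type*} [Field K] (v : AddRealValuation K)
    (c : v.subring) (hc : 0 < v.w (c : K))
    (f : PowerSeries v.subring) (heval : v.EvalZeroR f c) :
    ∃ g : PowerSeries v.subring,
      f = (PowerSeries.X - PowerSeries.C (R := v.subring) c) * g := by
  classical
  set F : ℕ → K := fun i => ((PowerSeries.coeff (R := v.subring) i f : v.subring) : K) with hF
  set SK : ℕ → K := fun n => ∑ i ∈ Finset.range n, F i * (c : K) ^ i with hSK
  have hScoe : ∀ n, ((∑ i ∈ Finset.range n,
      PowerSeries.coeff (R := v.subring) i f * c ^ i : v.subring) : K) = SK n := by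
    intro n
    show _ = ∑ i ∈ Finset.range n, F i * (c : K) ^ i
    push_cast [hF]
    rfl
  by_cases hc0 : (c : K) = 0
  · -- c = 0 : then f₀ = 0 and X ∣ f
    have hcz : c = 0 := Subtype.ext (by simpa using hc0)
    have h0 : F 0 = 0 := by
      apply v.eq_zero_of_forall_le
      intro M
      obtain ⟨N, hN⟩ := heval M
      have hm := hN (N + 1) (by omega)
      rw [hScoe] at hm
      have hSK1 : SK (N + 1) = F 0 := by
        show ∑ i ∈ Finset.range (N + 1), F i * (c : K) ^ i = F 0
        rw [Finset.sum_eq_single_of_mem 0 (Finset.mem_range.mpr (Nat.succ_pos N))]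
        · simp
        · intro i _ hi
          rw [hc0, zero_pow hi, mul_zero]
      rwa [hSK1] at hm
    have hf0 : PowerSeries.constantCoeff (R := v.subring) f = 0 := by
      rw [← PowerSeries.coeff_zero_eq_constantCoeff_apply]
      exact Subtype.ext (by simpa [hF] using h0)
    obtain ⟨g, hg⟩ := PowerSeries.X_dvd_iff.mpr hf0
    exact ⟨g, by simpa [hcz] using hg⟩
  · obtain ⟨r, hr⟩ := v.finite' _ hc0
    have hrpos : 0 < r := by
      rw [hr] at hc; exact_mod_cast hc
    have hfnn : ∀ i, (0 : EReal) ≤ v.w (F i) := fun i => (PowerSeries.coeff (R := v.subring) i f).2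
    have hterm : ∀ (n i : ℕ), n ≤ i →
        ((((n : ℝ) * r : ℝ)) : EReal) ≤ v.w (F i * (c : K) ^ i) := by
      intro n i hni
      rw [v.map_mul', v.w_pow _ r hr i]
      calc (((n : ℝ) * r : ℝ) : EReal) ≤ (((i : ℝ) * r : ℝ) : EReal) := by
            apply EReal.coe_le_coe_iff.mpr
            exact mul_le_mul_of_nonneg_right (by exact_mod_cast hni) hrpos.le
        _ = 0 + (((i : ℝ) * r : ℝ) : EReal) := (zero_add _).symm
        _ ≤ _ := add_le_add (hfnn i) le_rfl
    have hS : ∀ n : ℕ, ((((n : ℝ) * r : ℝ)) : EReal) ≤ v.w (SK n) := by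
      intro n
      obtain ⟨N, hN⟩ := heval ((n : ℝ) * r)
      have h1 : (((n : ℝ) * r : ℝ) : EReal) ≤ v.w (SK (max N n)) := by
        have := hN (max N n) (le_max_left _ _)
        rwa [hScoe] at this
      have h2 : (((n : ℝ) * r : ℝ) : EReal) ≤ v.w (SK (max N n) - SK n) := by
        have heq : SK (max N n) - SK n = ∑ i ∈ Finset.Ico n (max N n), F i * (c : K) ^ i :=
          (Finset.sum_Ico_eq_sub _ (le_max_right _ _)).symm
        rw [heq]
        exact v.w_sum_ge _ _ _ fun i hi => hterm n i (Finset.mem_Ico.mp hi).1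
      have heq : SK n = SK (max N n) - (SK (max N n) - SK n) := by ring
      rw [heq]
      exact le_trans (le_min h1 h2) (v.w_sub_ge _ _)
    have hcinv : v.w ((c : K)⁻¹) = ((-r : ℝ) : EReal) := v.w_inv _ r hc0 hr
    have hgmem : ∀ n : ℕ, (-(SK (n + 1)) * ((c : K)⁻¹) ^ (n + 1)) ∈ v.subring := by
      intro n
      show (0 : EReal) ≤ v.w _
      rw [v.map_mul', v.map_neg', v.w_pow _ (-r) hcinv (n + 1)]
      have h1 := hS (n + 1)
      have heq : (0 : EReal) = ((((n + 1 : ℕ) : ℝ) * r : ℝ) : EReal)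
          + ((((n + 1 : ℕ) : ℝ) * (-r) : ℝ) : EReal) := by
        rw [← EReal.coe_add]; norm_cast; ring
      rw [heq]
      exact add_le_add h1 le_rfl
    set G : PowerSeries v.subring := PowerSeries.mk (fun n => ⟨_, hgmem n⟩) with hG
    have hGcoe : ∀ n : ℕ, ((PowerSeries.coeff (R := v.subring) n G : v.subring) : K)
        = -(SK (n + 1)) * ((c : K)⁻¹) ^ (n + 1) := by
      intro n
      rw [hG, PowerSeries.coeff_mk]
    refine ⟨G, ?_⟩
    ext n
    cases n with
    | zero =>
        have hX : PowerSeries.coeff (R := v.subring) 0 (PowerSeries.X * G) = 0 := by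
          simp [PowerSeries.coeff_zero_eq_constantCoeff, map_mul]
        have e : PowerSeries.coeff (R := v.subring) 0 ((PowerSeries.X - PowerSeries.C (R := v.subring) c) * G)
            = 0 - c * PowerSeries.coeff (R := v.subring) 0 G := by
          rw [sub_mul, map_sub, hX, PowerSeries.coeff_C_mul]
        rw [e]
        push_cast
        rw [hGcoe 0]
        have hSK1 : SK 1 = F 0 := by
          show ∑ i ∈ Finset.range 1, F i * (c : K) ^ i = F 0
          simp
        rw [hSK1]
        show F 0 = 0 - (c : K) * (-(F 0) * ((c : K)⁻¹) ^ (0 + 1))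
        rw [zero_add, pow_one, mul_comm (-(F 0)), ← mul_assoc, mul_inv_cancel₀ hc0]
        ring
    | succ n =>
        have e : PowerSeries.coeff (R := v.subring) (n + 1)
              ((PowerSeries.X - PowerSeries.C (R := v.subring) c) * G)
            = PowerSeries.coeff (R := v.subring) n G - c * PowerSeries.coeff (R := v.subring) (n + 1) G := by
          rw [sub_mul, map_sub, PowerSeries.coeff_succ_X_mul, PowerSeries.coeff_C_mul]
        rw [e]
        push_cast
        rw [hGcoe n, hGcoe (n + 1)]
        have heq : SK (n + 1 + 1) = SK (n + 1) + F (n + 1) * (c : K) ^ (n + 1) :=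
          Finset.sum_range_succ _ _
        show F (n + 1) = -(SK (n + 1)) * ((c : K)⁻¹) ^ (n + 1)
          - (c : K) * (-(SK (n + 1 + 1)) * ((c : K)⁻¹) ^ (n + 1 + 1))
        rw [heq]
        have h1 : (c : K) * (c : K)⁻¹ = 1 := mul_inv_cancel₀ hc0
        have h2 : (c : K) ^ (n + 1) * ((c : K)⁻¹) ^ (n + 1) = 1 := by
          rw [← mul_pow, h1, one_pow]
        linear_combination (-(SK (n + 1)) * ((c : K)⁻¹) ^ (n + 1)
          - F (n + 1) * (c : K) ^ (n + 1) * ((c : K)⁻¹) ^ (n + 1)) * h1 - F (n + 1) * h2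
end

section
/- Let R be the valuation ring of a rank-1 valued field (K, w) with maximal ideal 𝔪. Suppose c ∈ 𝔪 and f ∈ R[[X]] satisfies f(c) = 0, w(f) = 0 (where w(Σ f_i X^i) = inf_i w(f_i)), and every coefficient f_i lies in 𝔪. Then the quotient g = f/(X − c) ∈ R[[X]] also satisfies w(g) = 0 and all coefficients of g lie in 𝔪. -/
open PowerSeries Filter Set

namespace AddRealValuation

variable {K : Type*} [Field K] (v : AddRealValuation K)

lemma mem_subring_iff (x : K) : x ∈ v.subring ↔ 0 ≤ v.w x := Iff.rfl

lemma w_sub (x y : K) : min (v.w x) (v.w y) ≤ v.w (x - y) := by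
  have h := v.add_le' x (-y)
  rw [v.map_neg'] at h
  simpa [sub_eq_add_neg] using h

lemma eq_zero_of_forall_le_s4 {x : K} (h : ∀ M : ℝ, (M : EReal) ≤ v.w x) : x = 0 := by
  by_contra hx
  obtain ⟨r, hr⟩ := v.finite' x hx
  have h2 := h (r + 1)
  rw [hr, EReal.coe_le_coe_iff] at h2
  linarith

lemma le_w_sum {M : EReal} (s : Finset ℕ) (u : ℕ → K) (h : ∀ i ∈ s, M ≤ v.w (u i)) :
    M ≤ v.w (∑ i ∈ s, u i) := by
  classical
  induction s using Finset.induction_on with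
  | empty => simp [v.map_zero']
  | @insert a s' hx ih =>
    rw [Finset.sum_insert hx]
    exact le_trans (le_min (h a (by simp)) (ih fun i hi => h i (by simp [hi]))) (v.add_le' _ _)

lemma le_w_pow {r : ℝ} {x : K} (hr : (r : EReal) ≤ v.w x) (i : ℕ) :
    ((i * r : ℝ) : EReal) ≤ v.w (x ^ i) := by
  induction i with
  | zero => simp [pow_zero, v.map_one']
  | succ n ih =>
    rw [pow_succ, v.map_mul']
    have e : ((n + 1 : ℕ) * r : ℝ) = (n * r : ℝ) + r := by push_cast; ring
    rw [e, EReal.coe_add]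
    exact add_le_add ih hr

lemma lim_unique (s : ℕ → K) (a b : K)
    (ha : ∀ M : ℝ, ∃ N, ∀ m ≥ N, (M : EReal) ≤ v.w (s m - a))
    (hb : ∀ M : ℝ, ∃ N, ∀ m ≥ N, (M : EReal) ≤ v.w (s m - b)) : a = b := by
  have h : ∀ M : ℝ, (M : EReal) ≤ v.w (a - b) := by
    intro M
    obtain ⟨N1, h1⟩ := ha M
    obtain ⟨N2, h2⟩ := hb M
    have e : a - b = (s (max N1 N2) - b) - (s (max N1 N2) - a) := by ring
    rw [e]
    exact le_trans (le_min (h2 _ le_sup_right) (h1 _ le_sup_left)) (v.w_sub _ _)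
  exact sub_eq_zero.mp (v.eq_zero_of_forall_le_s4 h)

lemma aux (hcomp : v.IsComplete) (F : ℕ → K) (cc : K)
    (hFnn : ∀ i, 0 ≤ v.w (F i)) (hc : 0 < v.w cc)
    (heval : ∀ M : ℝ, ∃ N : ℕ, ∀ n ≥ N,
      (M : EReal) ≤ v.w (∑ i ∈ Finset.range n, F i * cc ^ i))
    (hwf : (⨅ i, v.w (F i)) = 0)
    (hm : ∀ i, 0 < v.w (F i)) :
    ∃ L : ℕ → K, (∀ n, 0 < v.w (L n)) ∧ (∀ n, F (n + 1) = L n - cc * L (n + 1)) ∧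
      F 0 = -(cc * L 0) ∧ (⨅ n, v.w (L n)) = 0 := by
  classical
  have hcnn : ∀ i : ℕ, 0 ≤ v.w (cc ^ i) := by
    intro i
    induction i with
    | zero => simp [pow_zero, v.map_one']
    | succ n ih => rw [pow_succ, v.map_mul']; exact add_nonneg ih hc.le
  have hterm : ∀ M : ℝ, ∃ N : ℕ, ∀ i ≥ N, (M : EReal) ≤ v.w (cc ^ i) := by
    rcases eq_or_ne cc 0 with h0 | h0
    · intro M
      refine ⟨1, fun i hi => ?_⟩
      rw [h0, zero_pow (by omega), v.map_zero']
      exact le_top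
    · obtain ⟨r, hr⟩ := v.finite' cc h0
      have hrpos : 0 < r := by
        rw [hr] at hc
        exact_mod_cast hc
      intro M
      obtain ⟨N, hN⟩ := exists_nat_ge (M / r)
      refine ⟨N, fun i hi => ?_⟩
      refine le_trans ?_ (v.le_w_pow hr.ge i)
      rw [EReal.coe_le_coe_iff]
      have h1 : (N : ℝ) ≤ i := Nat.cast_le.mpr hi
      rw [div_le_iff₀ hrpos] at hN
      nlinarith
  set u : ℕ → ℕ → K := fun n m => ∑ i ∈ Finset.range m, F (n + 1 + i) * cc ^ i with hu
  have htermM : ∀ M : ℝ, ∃ N : ℕ, ∀ n, ∀ i ≥ N,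
      (M : EReal) ≤ v.w (F (n + 1 + i) * cc ^ i) := by
    intro M
    obtain ⟨N, hN⟩ := hterm M
    refine ⟨N, fun n i hi => ?_⟩
    rw [v.map_mul']
    calc (M : EReal) = 0 + M := (zero_add _).symm
      _ ≤ v.w (F (n + 1 + i)) + v.w (cc ^ i) := add_le_add (hFnn _) (hN i hi)
  have hcau : ∀ n, ∀ M : ℝ, ∃ N, ∀ m ≥ N, ∀ m' ≥ N, (M : EReal) ≤ v.w (u n m - u n m') := by
    intro n M
    obtain ⟨N, hN⟩ := htermM M
    refine ⟨N, fun m hm' m' hm'' => ?_⟩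
    rcases le_total m' m with h | h
    · rw [show u n m - u n m' = ∑ i ∈ Finset.Ico m' m, F (n + 1 + i) * cc ^ i from
        (Finset.sum_Ico_eq_sub _ h).symm]
      exact v.le_w_sum _ _ fun i hi => hN n i (le_trans hm'' (Finset.mem_Ico.mp hi).1)
    · rw [← v.map_neg', neg_sub, show u n m' - u n m = ∑ i ∈ Finset.Ico m m', F (n + 1 + i) * cc ^ i from
        (Finset.sum_Ico_eq_sub _ h).symm]
      exact v.le_w_sum _ _ fun i hi => hN n i (le_trans hm' (Finset.mem_Ico.mp hi).1)
  choose L hL using fun n => hcomp (u n) (hcau n)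
  have hstep : ∀ n m, u n (m + 1) = F (n + 1) + cc * u (n + 1) m := by
    intro n m
    simp only [hu]
    rw [Finset.sum_range_succ', Finset.mul_sum, add_comm]
    simp only [pow_zero, mul_one, add_zero]
    congr 1
    refine Finset.sum_congr rfl fun i _ => ?_
    have e : n + 1 + (i + 1) = n + 1 + 1 + i := by omega
    rw [e, pow_succ]
    ring
  have hrel : ∀ n, L n = F (n + 1) + cc * L (n + 1) := by
    intro n
    refine v.lim_unique (fun m => u n (m + 1)) _ _ ?_ ?_
    · intro M
      obtain ⟨N, hN⟩ := hL n M
      exact ⟨N, fun m hm' => hN (m + 1) (by omega)⟩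
    · intro M
      obtain ⟨N, hN⟩ := hL (n + 1) M
      refine ⟨N, fun m hm' => ?_⟩
      have e : u n (m + 1) - (F (n + 1) + cc * L (n + 1)) = cc * (u (n + 1) m - L (n + 1)) := by
        rw [hstep n m]; ring
      rw [e, v.map_mul']
      calc (M : EReal) = 0 + M := (zero_add _).symm
        _ ≤ _ := add_le_add hc.le (hN m hm')
  have e0 : ∀ m, (∑ i ∈ Finset.range (m + 1), F i * cc ^ i) = F 0 + cc * u 0 m := by
    intro m
    simp only [hu]
    rw [Finset.sum_range_succ', Finset.mul_sum, add_comm]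
    simp only [pow_zero, mul_one]
    congr 1
    refine Finset.sum_congr rfl fun i _ => ?_
    have e : 0 + 1 + i = i + 1 := by omega
    rw [e, pow_succ]
    ring
  have hrel0 : F 0 + cc * L 0 = 0 := by
    refine v.lim_unique (fun m => ∑ i ∈ Finset.range (m + 1), F i * cc ^ i) _ _ ?_ ?_
    · intro M
      obtain ⟨N, hN⟩ := hL 0 M
      refine ⟨N, fun m hm' => ?_⟩
      have e : (∑ i ∈ Finset.range (m + 1), F i * cc ^ i) - (F 0 + cc * L 0)
          = cc * (u 0 m - L 0) := by
        rw [e0 m]; ring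
      rw [e, v.map_mul']
      calc (M : EReal) = 0 + M := (zero_add _).symm
        _ ≤ _ := add_le_add hc.le (hN m hm')
    · intro M
      obtain ⟨N, hN⟩ := heval M
      exact ⟨N, fun m hm' => by rw [sub_zero]; exact hN (m + 1) (by omega)⟩
  have hLpos : ∀ n, 0 < v.w (L n) := by
    intro n
    rcases eq_or_ne (L n) 0 with h0 | h0
    · rw [h0, v.map_zero']
      exact lt_of_lt_of_le (by norm_num : (0 : EReal) < 1) le_top
    obtain ⟨r, hr⟩ := v.finite' _ h0
    obtain ⟨N, hN⟩ := hL n (r + 1)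
    have hne : (Finset.range (max N 1)).Nonempty := ⟨0, Finset.mem_range.mpr (by omega)⟩
    set δ := (Finset.range (max N 1)).inf' hne (fun i => v.w (F (n + 1 + i) * cc ^ i)) with hδ
    have hδpos : 0 < δ := by
      rw [hδ, Finset.lt_inf'_iff]
      intro i _
      rw [v.map_mul']
      calc (0 : EReal) < v.w (F (n + 1 + i)) := hm _
        _ = v.w (F (n + 1 + i)) + 0 := (add_zero _).symm
        _ ≤ v.w (F (n + 1 + i)) + v.w (cc ^ i) := add_le_add le_rfl (hcnn i)
    have hδle : δ ≤ v.w (u n (max N 1)) := by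
      simp only [hu]
      exact v.le_w_sum _ _ fun i hi => Finset.inf'_le _ hi
    have h3 := hN (max N 1) (le_max_left _ _)
    have h5 := v.w_sub (u n (max N 1)) (u n (max N 1) - L n)
    rw [sub_sub_cancel] at h5
    have h4 : min δ ((r + 1 : ℝ) : EReal) ≤ v.w (L n) :=
      le_trans (min_le_min hδle h3) h5
    rw [hr] at h4 ⊢
    rcases min_le_iff.mp h4 with h7 | h7
    · exact lt_of_lt_of_le hδpos h7
    · exfalso
      rw [EReal.coe_le_coe_iff] at h7
      linarith
  refine ⟨L, hLpos, ?_, eq_neg_of_add_eq_zero_left hrel0, ?_⟩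
  · intro n
    rw [hrel n]; ring
  · refine le_antisymm ?_ (le_iInf fun n => (hLpos n).le)
    have hle : (⨅ n, v.w (L n)) ≤ ⨅ i, v.w (F i) := by
      refine le_iInf fun i => ?_
      cases i with
      | zero =>
        rw [eq_neg_of_add_eq_zero_left hrel0, v.map_neg', v.map_mul']
        calc (⨅ n, v.w (L n)) ≤ v.w (L 0) := iInf_le _ 0
          _ = 0 + v.w (L 0) := (zero_add _).symm
          _ ≤ v.w cc + v.w (L 0) := add_le_add hc.le le_rfl
      | succ n =>
        have e : F (n + 1) = L n - cc * L (n + 1) := by rw [hrel n]; ring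
        rw [e]
        refine le_trans (le_min (iInf_le _ n) ?_) (v.w_sub _ _)
        rw [v.map_mul']
        calc (⨅ k, v.w (L k)) ≤ v.w (L (n + 1)) := iInf_le _ _
          _ = 0 + v.w (L (n + 1)) := (zero_add _).symm
          _ ≤ v.w cc + v.w (L (n + 1)) := add_le_add hc.le le_rfl
    rw [hwf] at hle
    exact hle

end AddRealValuation



/-- If `c ∈ 𝔪`, `f ∈ R[[X]]` satisfies `f(c) = 0`, `w f = 0` and all
coefficients of `f` lie in `𝔪`, then the quotient `g = f / (X - c)` lies in `R[[X]]`
and again satisfies `w g = 0` with all coefficients in `𝔪`. -/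
theorem statement4 {K : Type*} [Field K] (v : AddRealValuation K)
    (hcomp : v.IsComplete)
    (c : v.subring) (hc : 0 < v.w (c : K))
    (f : PowerSeries v.subring) (heval : v.EvalZeroR f c)
    (hwf : v.wR f = 0)
    (hm : ∀ i : ℕ, 0 < v.w ((PowerSeries.coeff (R := v.subring) i f : v.subring) : K)) :
    ∃ g : PowerSeries v.subring,
      f = (PowerSeries.X - PowerSeries.C (R := v.subring) c) * g ∧
      v.wR g = 0 ∧
      ∀ i : ℕ, 0 < v.w ((PowerSeries.coeff (R := v.subring) i g : v.subring) : K) := by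
  classical
  have heval' : ∀ M : ℝ, ∃ N : ℕ, ∀ n ≥ N, (M : EReal) ≤
      v.w (∑ i ∈ Finset.range n,
        ((PowerSeries.coeff (R := v.subring) i f : v.subring) : K) * (c : K) ^ i) := by
    intro M
    obtain ⟨N, hN⟩ := heval M
    refine ⟨N, fun n hn => ?_⟩
    have h1 := hN n hn
    have e : ((∑ i ∈ Finset.range n,
        PowerSeries.coeff (R := v.subring) i f * c ^ i : v.subring) : K)
        = ∑ i ∈ Finset.range n,
          ((PowerSeries.coeff (R := v.subring) i f : v.subring) : K) * (c : K) ^ i := by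
      push_cast
      rfl
    rwa [e] at h1
  obtain ⟨L, hLpos, hrel, hrel0, hinf⟩ := v.aux hcomp
    (fun i => ((PowerSeries.coeff (R := v.subring) i f : v.subring) : K)) (c : K)
    (fun i => (PowerSeries.coeff (R := v.subring) i f).2) hc heval' hwf hm
  refine ⟨PowerSeries.mk (fun n => (⟨L n, (hLpos n).le⟩ : v.subring)), ?_, ?_, ?_⟩
  · ext n
    rw [sub_mul, map_sub]
    cases n with
    | zero =>
      rw [PowerSeries.coeff_zero_X_mul, PowerSeries.coeff_C_mul, PowerSeries.coeff_mk]
      push_cast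
      have h0 : ((PowerSeries.coeff (R := v.subring) 0 f : v.subring) : K) = -((c : K) * L 0) := hrel0
      rw [h0]
      ring
    | succ n =>
      rw [PowerSeries.coeff_succ_X_mul, PowerSeries.coeff_C_mul, PowerSeries.coeff_mk,
        PowerSeries.coeff_mk]
      push_cast
      exact hrel n
  · simp only [AddRealValuation.wR, PowerSeries.coeff_mk]
    exact hinf
  · intro i
    simp only [PowerSeries.coeff_mk]
    exact hLpos i
end

section
/- Let R be the valuation ring of a field K complete with respect to a non-discrete rank-1 valuation w, with maximal ideal 𝔪, and suppose D = R[[X]] is a generalized Krull domain with defining family ℱ. Then for every monic irreducible polynomial p(X) ∈ R[X] with constant term p₀ ∈ 𝔪, there exists v ∈ ℱ that is trivial on R and satisfies v(p(X)) > 0. -/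
open PowerSeries Filter Set

namespace AddRealValuation

variable {L : Type*} [Field L] (u : AddRealValuation L)

lemma w_pow_real' (x : L) (r : ℝ) (h : u.w x = (r : EReal)) (k : ℕ) :
    u.w (x ^ k) = (((k : ℝ) * r : ℝ) : EReal) := by
  induction k with
  | zero => simpa using u.map_one'
  | succ n ih =>
      rw [pow_succ, u.map_mul', ih, h, ← EReal.coe_add]
      congr 1
      push_cast
      ring

lemma w_pow_zero' (x : L) (h : u.w x = 0) (k : ℕ) : u.w (x ^ k) = 0 := by
  induction k with
  | zero => simpa using u.map_one'
  | succ n ih => rw [pow_succ, u.map_mul', ih, h, add_zero]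

lemma w_inv_add' (x : L) (hx : x ≠ 0) : u.w x + u.w x⁻¹ = 0 := by
  rw [← u.map_mul', mul_inv_cancel₀ hx, u.map_one']

lemma w_inv_real' (x : L) (hx : x ≠ 0) (r : ℝ) (h : u.w x = (r : EReal)) :
    u.w x⁻¹ = ((-r : ℝ) : EReal) := by
  obtain ⟨s, hs⟩ := u.finite' x⁻¹ (inv_ne_zero hx)
  have h0 := u.w_inv_add' x hx
  rw [h, hs, ← EReal.coe_add] at h0
  have : r + s = 0 := by exact_mod_cast h0
  rw [hs]
  congr 1
  linarith

lemma w_sub_min' (x y : L) : min (u.w x) (u.w y) ≤ u.w (x - y) := by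
  have h := u.add_le' x (-y)
  rw [u.map_neg'] at h
  rwa [sub_eq_add_neg]

end AddRealValuation

set_option maxHeartbeats 1000000 in
set_option synthInstance.maxHeartbeats 1000000 in
/-- Let `K` be complete with respect to a non-discrete rank-1 valuation,
`R` its valuation ring, `𝔪` its maximal ideal, and suppose `D = R[[X]]` is a generalized
Krull domain with defining family `𝓕`. Then for every monic irreducible `p ∈ R[X]` with
constant term in `𝔪`, there exists `u ∈ 𝓕` trivial on `R` with `u p > 0`. -/
theorem statement12 {K : Type*} [Field K] (v : AddRealValuation K)
    (hcomp : v.IsComplete) (hnd : v.Nondiscrete)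
    (𝓕 : Set (AddRealValuation (FractionRing (PowerSeries v.subring))))
    (hGK : IsGKFamily (PowerSeries v.subring) (FractionRing (PowerSeries v.subring)) 𝓕)
    (p : Polynomial v.subring) (hpm : p.Monic) (hpi : Irreducible p)
    (hp0 : 0 < v.w ((p.coeff 0 : v.subring) : K)) :
    ∃ u ∈ 𝓕,
      (∀ a : v.subring, a ≠ 0 →
        u.w (algebraMap (PowerSeries v.subring) (FractionRing (PowerSeries v.subring))
          (PowerSeries.C (R := v.subring) a)) = 0) ∧
      0 < u.w (algebraMap (PowerSeries v.subring) (FractionRing (PowerSeries v.subring))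
        (p : PowerSeries v.subring)) := by
    classical
  obtain ⟨hGa, hGb, -⟩ := hGK
  set φ := algebraMap (PowerSeries v.subring) (FractionRing (PowerSeries v.subring)) with hφ
  have hinj : Function.Injective φ :=
    IsFractionRing.injective (PowerSeries v.subring) (FractionRing (PowerSeries v.subring))
  have hnn : ∀ u ∈ 𝓕, ∀ f : PowerSeries v.subring, 0 ≤ u.w (φ f) := by
    intro u hu f
    rw [hGa u hu (φ f)]
    refine ⟨f, 1, one_ne_zero, ?_, by rw [map_one, mul_one]⟩
    rw [map_one, u.map_one']
    exact lt_irrefl 0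
  have hunit : ∀ u ∈ 𝓕, ∀ f : PowerSeries v.subring, IsUnit f → u.w (φ f) = 0 := by
    intro u hu f hf
    obtain ⟨g, hg⟩ := hf.exists_right_inv
    have h1 : u.w (φ f) + u.w (φ g) = 0 := by
      rw [← u.map_mul', ← map_mul, hg, map_one, u.map_one']
    refine le_antisymm ?_ (hnn u hu f)
    calc u.w (φ f) ≤ u.w (φ f) + u.w (φ g) := le_add_of_nonneg_right (hnn u hu g)
      _ = 0 := h1
  have hKunit : ∀ c : v.subring, c ≠ 0 → ¬ 0 < v.w (c : K) → IsUnit c := by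
    intro c hc0 hcp
    have hcK : (c : K) ≠ 0 := fun h => hc0 (Subtype.ext h)
    have hz : v.w (c : K) = 0 := le_antisymm (not_lt.mp hcp) c.2
    have hiz : v.w ((c : K)⁻¹) = 0 := by
      have h := v.w_inv_add' (c : K) hcK
      rwa [hz, zero_add] at h
    refine IsUnit.of_mul_eq_one (a := c) ⟨(c : K)⁻¹, show (0 : EReal) ≤ v.w ((c : K)⁻¹) from hiz.ge⟩
      (Subtype.ext ?_)
    simpa using mul_inv_cancel₀ hcK
  have hNU : ∀ u ∈ 𝓕, ∀ f : PowerSeries v.subring, 0 < u.w (φ f) →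
      PowerSeries.constantCoeff (R := v.subring) f = 0 ∨
      0 < v.w ((PowerSeries.constantCoeff (R := v.subring) f : v.subring) : K) := by
    intro u hu f hf
    by_contra hcon
    push_neg at hcon
    have hc := hKunit _ hcon.1 (not_lt.mpr hcon.2)
    have hfu : IsUnit f := PowerSeries.isUnit_iff_constantCoeff.mpr hc
    rw [hunit u hu f hfu] at hf
    exact lt_irrefl 0 hf
  have hpne : (p : PowerSeries v.subring) ≠ 0 := by
    intro h
    have h1 := congrArg (PowerSeries.coeff (R := v.subring) p.natDegree) h
    rw [Polynomial.coeff_coe, hpm.coeff_natDegree, map_zero] at h1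
    exact one_ne_zero h1
  have hφpne : φ (p : PowerSeries v.subring) ≠ 0 := fun h => hpne (hinj (by rw [h, map_zero]))
  have hexu : ∃ u ∈ 𝓕, 0 < u.w (φ (p : PowerSeries v.subring)) := by
    by_contra hcon
    push_neg at hcon
    have hz : ∀ u ∈ 𝓕, u.w (φ (p : PowerSeries v.subring)) = 0 := fun u hu =>
      le_antisymm (hcon u hu) (hnn u hu _)
    have hinv : ∀ u ∈ 𝓕, 0 ≤ u.w ((φ (p : PowerSeries v.subring))⁻¹) := by
      intro u hu
      have h := u.w_inv_add' _ hφpne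
      rw [hz u hu, zero_add] at h
      rw [h]
    obtain ⟨g, hg⟩ := hGb _ hinv
    have hpg : (p : PowerSeries v.subring) * g = 1 := by
      apply hinj
      rw [map_mul, map_one, ← hg, mul_inv_cancel₀ hφpne]
    have hc := congrArg (PowerSeries.constantCoeff (R := v.subring)) hpg
    rw [map_mul, map_one, Polynomial.constantCoeff_coe] at hc
    have hKeq : ((p.coeff 0 : v.subring) : K) *
        ((PowerSeries.constantCoeff (R := v.subring) g : v.subring) : K) = 1 := by
      exact_mod_cast congrArg Subtype.val hc
    have hsum : v.w ((p.coeff 0 : v.subring) : K) +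
        v.w ((PowerSeries.constantCoeff (R := v.subring) g : v.subring) : K) = 0 := by
      rw [← v.map_mul', hKeq, v.map_one']
    have h1 : v.w ((p.coeff 0 : v.subring) : K) ≤ 0 := by
      calc v.w ((p.coeff 0 : v.subring) : K)
          ≤ v.w ((p.coeff 0 : v.subring) : K) +
            v.w ((PowerSeries.constantCoeff (R := v.subring) g : v.subring) : K) :=
            le_add_of_nonneg_right (PowerSeries.constantCoeff (R := v.subring) g).2
        _ = 0 := hsum
    exact absurd hp0 (not_lt.mpr h1)
  obtain ⟨u, hu, hup⟩ := hexu
  refine ⟨u, hu, ?_, hup⟩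
  intro a ha0
  by_contra hne
  have hCa : 0 < u.w (φ (PowerSeries.C (R := v.subring) a)) :=
    lt_of_le_of_ne (hnn u hu _) (Ne.symm hne)
  have haK : (a : K) ≠ 0 := fun h => ha0 (Subtype.ext h)
  have hma : 0 < v.w (a : K) := by
    rcases hNU u hu _ hCa with h | h
    · rw [PowerSeries.constantCoeff_C] at h; exact absurd h ha0
    · rwa [PowerSeries.constantCoeff_C] at h
  have hM : ∀ m : v.subring, 0 < v.w ((m : K)) → 0 < u.w (φ (PowerSeries.C (R := v.subring) m)) := by
    intro m hm
    by_cases hm0 : m = 0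
    · subst hm0
      rw [map_zero, map_zero, u.map_zero']
      exact EReal.zero_lt_top
    have hmK : (m : K) ≠ 0 := fun h => hm0 (Subtype.ext h)
    obtain ⟨r, hr⟩ := v.finite' _ hmK
    obtain ⟨s, hs⟩ := v.finite' _ haK
    have hrpos : 0 < r := by rw [hr] at hm; exact_mod_cast hm
    obtain ⟨k, hk⟩ := exists_nat_ge (s / r)
    have hks : s ≤ (k : ℝ) * r := by
      rw [div_le_iff₀ hrpos] at hk; linarith
    have hts : 0 ≤ v.w ((m : K) ^ k * ((a : K))⁻¹) := by
      rw [v.map_mul', v.w_pow_real' _ r hr k, v.w_inv_real' _ haK s hs, ← EReal.coe_add]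
      exact_mod_cast (by linarith : (0:ℝ) ≤ (k:ℝ) * r + -s)
    have hat : a * (⟨(m : K) ^ k * ((a : K))⁻¹, hts⟩ : v.subring) = m ^ k := by
      apply Subtype.ext
      push_cast
      field_simp
    have hCk : 0 < u.w (φ (PowerSeries.C (R := v.subring) m) ^ k) := by
      have hCmk : (PowerSeries.C (R := v.subring) m) ^ k =
          PowerSeries.C (R := v.subring) a *
            PowerSeries.C (R := v.subring) (⟨(m : K) ^ k * ((a : K))⁻¹, hts⟩ : v.subring) := by
        rw [← map_mul, hat, map_pow]
      calc (0 : EReal) < u.w (φ (PowerSeries.C (R := v.subring) a)) := hCa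
        _ ≤ u.w (φ (PowerSeries.C (R := v.subring) a)) +
            u.w (φ (PowerSeries.C (R := v.subring) (⟨(m : K) ^ k * ((a : K))⁻¹, hts⟩ : v.subring))) :=
            le_add_of_nonneg_right (hnn u hu _)
        _ = u.w (φ (PowerSeries.C (R := v.subring) m) ^ k) := by
            rw [← u.map_mul', ← map_mul, ← hCmk, map_pow]
    by_contra hcon
    have h0 : u.w (φ (PowerSeries.C (R := v.subring) m)) = 0 :=
      le_antisymm (not_lt.mp hcon) (hnn u hu _)
    rw [u.w_pow_zero' _ h0 k] at hCk
    exact lt_irrefl 0 hCk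
  have hXD : (PowerSeries.X : PowerSeries v.subring) ≠ 0 := PowerSeries.X_ne_zero
  have hφX : φ PowerSeries.X ≠ 0 := fun h => hXD (hinj (by rw [h, map_zero]))
  have hXnn : 0 ≤ u.w (φ PowerSeries.X) := hnn u hu _
  rcases lt_or_eq_of_le hXnn with hXpos | hX0
  · -- u(X) > 0 : localization contradiction
    obtain ⟨r, hr⟩ := u.finite' _ hφX
    have hrpos : 0 < r := by rw [hr] at hXpos; exact_mod_cast hXpos
    have hφCa : φ (PowerSeries.C (R := v.subring) a) ≠ 0 := by
      intro h
      have h2 : PowerSeries.C (R := v.subring) a = 0 := hinj (by rw [h, map_zero])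
      have h3 := congrArg (PowerSeries.constantCoeff (R := v.subring)) h2
      rw [PowerSeries.constantCoeff_C, map_zero] at h3
      exact ha0 h3
    obtain ⟨s, hs⟩ := u.finite' _ hφCa
    have hspos : 0 < s := by rw [hs] at hCa; exact_mod_cast hCa
    obtain ⟨k, hk⟩ := exists_nat_ge (r / s)
    have hks : r ≤ (k : ℝ) * s := by rw [div_le_iff₀ hspos] at hk; linarith
    have hxnn : 0 ≤ u.w (φ (PowerSeries.C (R := v.subring) a) ^ k * (φ PowerSeries.X)⁻¹) := by
      rw [u.map_mul', u.w_pow_real' _ s hs k, u.w_inv_real' _ hφX r hr, ← EReal.coe_add]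
      exact_mod_cast (by linarith : (0:ℝ) ≤ (k:ℝ) * s + -r)
    obtain ⟨f, g, hg0, hgle, hxeq⟩ := (hGa u hu _).mp hxnn
    have hDeq : PowerSeries.C (R := v.subring) a ^ k * g = f * PowerSeries.X := by
      apply hinj
      rw [map_mul, map_mul, map_pow]
      calc φ (PowerSeries.C (R := v.subring) a) ^ k * φ g
          = φ (PowerSeries.C (R := v.subring) a) ^ k * (φ PowerSeries.X)⁻¹ * φ g * φ PowerSeries.X := by
            field_simp
        _ = φ f * φ PowerSeries.X := by rw [hxeq]
    have hc := congrArg (PowerSeries.constantCoeff (R := v.subring)) hDeq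
    rw [map_mul, map_mul, map_pow, PowerSeries.constantCoeff_C,
      PowerSeries.constantCoeff_X, mul_zero] at hc
    have hg00 : PowerSeries.constantCoeff (R := v.subring) g = 0 := by
      rcases mul_eq_zero.mp hc with h | h
      · exact absurd h (pow_ne_zero k ha0)
      · exact h
    obtain ⟨h, hh⟩ := PowerSeries.X_dvd_iff.mpr hg00
    refine hgle ?_
    rw [hh, map_mul, u.map_mul', hr]
    calc (0 : EReal) < (r : EReal) := by exact_mod_cast hrpos
      _ ≤ (r : EReal) + u.w (φ h) := le_add_of_nonneg_right (hnn u hu _)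
  · -- u(X) = 0 : descent along the coefficients of p
    set q : ℕ → PowerSeries v.subring := fun k => PowerSeries.mk fun i => p.coeff (k + i)
      with hqdef
    have hq0 : q 0 = (p : PowerSeries v.subring) := by
      ext n
      simp [hqdef, Polynomial.coeff_coe]
    have hqrel : ∀ k, q k = PowerSeries.X * q (k + 1) +
        PowerSeries.C (R := v.subring) (p.coeff k) := by
      intro k
      ext n
      cases n with
      | zero =>
        simp [hqdef]
      | succ n =>
        rw [map_add, PowerSeries.coeff_succ_X_mul, PowerSeries.coeff_mk,
          PowerSeries.coeff_mk, PowerSeries.coeff_C, if_neg (Nat.succ_ne_zero n), add_zero,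
          show k + (n + 1) = k + 1 + n from by omega]
    have hqtop : q p.natDegree = 1 := by
      ext n
      cases n with
      | zero =>
        rw [PowerSeries.coeff_mk, PowerSeries.coeff_one, if_pos rfl, Nat.add_zero,
          hpm.coeff_natDegree]
      | succ n =>
        rw [PowerSeries.coeff_mk, PowerSeries.coeff_one, if_neg (Nat.succ_ne_zero n)]
        have hlt : p.natDegree < p.natDegree + (n + 1) := by omega
        rw [Polynomial.coeff_eq_zero_of_natDegree_lt hlt]
    have hstep : ∀ k, 0 < u.w (φ (q k)) → 0 < u.w (φ (q (k + 1))) := by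
      intro k hk
      have hcc : PowerSeries.constantCoeff (R := v.subring) (q k) = p.coeff k := by
        simp [hqdef, ← PowerSeries.coeff_zero_eq_constantCoeff]
      have hCp : 0 < u.w (φ (PowerSeries.C (R := v.subring) (p.coeff k))) := by
        rcases hNU u hu _ hk with h | h
        · rw [hcc] at h
          rw [h, map_zero, map_zero, u.map_zero']
          exact EReal.zero_lt_top
        · rw [hcc] at h
          exact hM _ h
      have hXq : 0 < u.w (φ (PowerSeries.X * q (k + 1))) := by
        have heq : PowerSeries.X * q (k + 1) =
            q k - PowerSeries.C (R := v.subring) (p.coeff k) := by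
          rw [hqrel k]; ring
        rw [heq, RingHom.map_sub φ]
        exact lt_of_lt_of_le (lt_min hk hCp) (u.w_sub_min' _ _)
      rwa [RingHom.map_mul φ, u.map_mul', ← hX0, zero_add] at hXq
    have hall : ∀ k, 0 < u.w (φ (q k)) := by
      intro k
      induction k with
      | zero => rw [hq0]; exact hup
      | succ n ih => exact hstep n ih
    have hfin := hall p.natDegree
    rw [hqtop, map_one, u.map_one'] at hfin
    exact lt_irrefl 0 hfin
end
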